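/- Let Y be a 0-dimensional Tychonoff space, let τ ≥ ℵ₀, and let P and K be compact subsets of Y × ℕ^τ. Then every homeomorphism f : P → K satisfying π₁ ∘ f = π₁|P (where π₁ : Y × ℕ^τ → Y is the projection) can be extended to a homeomorphism f̃ : Y × ℕ^τ → Y × ℕ^τ such that π₁ ∘ f̃ = π₁. -/

import Mathlib

open Topology Set

/-- A space is *0-dimensional* if it admits a dense topological embedding into a
compact Hausdorff totally disconnected space (a compactification of covering dimension 0). -/
def ZeroDimensional (Y : Type u) [TopologicalSpace Y] : Prop :=
  ∃ (Z : Type u) (_ : TopologicalSpace Z), CompactSpace Z ∧ T2Space Z ∧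
    TotallyDisconnectedSpace Z ∧ ∃ e : Y → Z, Topology.IsEmbedding e ∧ DenseRange e

/-- Every point has a clopen neighborhood basis. -/
def ClopenBasisProp (X : Type*) [TopologicalSpace X] : Prop :=
  ∀ (x : X) (U : Set X), IsOpen U → x ∈ U → ∃ V, IsClopen V ∧ x ∈ V ∧ V ⊆ U

section Helpers

variable {X : Type*} [TopologicalSpace X]

lemma clopenBasisProp_of_embedding {Z : Type*} [TopologicalSpace Z]
    (hQ : ClopenBasisProp Z) {e : X → Z} (he : Topology.IsEmbedding e) :
    ClopenBasisProp X := by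
  intro x U hU hx
  obtain ⟨U', hU', hUe⟩ := he.isInducing.isOpen_iff.mp hU
  obtain ⟨V', hV', hxV', hVU'⟩ := hQ (e x) U' hU' (by rw [← hUe] at hx; exact hx)
  exact ⟨e ⁻¹' V', hV'.preimage he.continuous, hxV',
    fun y hy => by rw [← hUe]; exact hVU' hy⟩

lemma clopenBasisProp_of_compact_t2_totdisc {Z : Type*} [TopologicalSpace Z]
    [CompactSpace Z] [T2Space Z] [TotallyDisconnectedSpace Z] :
    ClopenBasisProp Z := by
  intro x U hU hx
  obtain ⟨V, hV, hxV, hVU⟩ := isTopologicalBasis_isClopen.mem_nhds_iff.mp (hU.mem_nhds hx)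
  exact ⟨V, hV, hxV, hVU⟩

lemma clopenBasisProp_pi {ι α : Type*} [TopologicalSpace α] [DiscreteTopology α] :
    ClopenBasisProp (ι → α) := by
  intro x U hU hx
  obtain ⟨I, u, hu, hsub⟩ := isOpen_pi_iff.mp hU x hx
  refine ⟨(I : Set ι).pi fun i => {x i}, ?_, ?_, ?_⟩
  · have : (I : Set ι).pi (fun i => {x i}) =
        ⋂ i ∈ (I : Set ι), (fun f : ι → α => f i) ⁻¹' {x i} := by
      ext y; simp [Set.mem_pi]
    rw [this]
    exact I.finite_toSet.isClopen_biInter fun i _ =>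
      (isClopen_discrete _).preimage (continuous_apply i)
  · intro i _; rfl
  · intro y hy
    apply hsub
    intro i hi
    have := hy i hi
    simp only [mem_singleton_iff] at this
    rw [this]
    exact (hu i hi).2

lemma clopenBasisProp_prod {X' : Type*} [TopologicalSpace X']
    (hX : ClopenBasisProp X) (hX' : ClopenBasisProp X') :
    ClopenBasisProp (X × X') := by
  rintro ⟨a, b⟩ U hU hab
  obtain ⟨u, v, hu, hv, ha, hb, huv⟩ := isOpen_prod_iff.mp hU a b hab
  obtain ⟨Va, hVa, haV, hVau⟩ := hX a u hu ha
  obtain ⟨Vb, hVb, hbV, hVbv⟩ := hX' b v hv hb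
  exact ⟨Va ×ˢ Vb, hVa.prod hVb, ⟨haV, hbV⟩, (Set.prod_mono hVau hVbv).trans huv⟩

/-- Separate a compact set from a disjoint closed set by a clopen set. -/
lemma clopen_separation (hQ : ClopenBasisProp X) {P L : Set X} (hP : IsCompact P)
    (hL : IsClosed L) (hd : Disjoint P L) :
    ∃ U, IsClopen U ∧ P ⊆ U ∧ Disjoint U L := by
  classical
  have hmem : ∀ x ∈ P, ∃ V, IsClopen V ∧ x ∈ V ∧ V ⊆ Lᶜ := fun x hx =>
    hQ x Lᶜ hL.isOpen_compl (disjoint_left.mp hd hx)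
  choose! V hV1 hV2 hV3 using hmem
  obtain ⟨t, htP, hcov⟩ := hP.elim_nhds_subcover V
    (fun x hx => ((hV1 x hx).isOpen).mem_nhds (hV2 x hx))
  refine ⟨⋃ x ∈ t, V x, isClopen_biUnion_finset (fun x hx => hV1 x (htP x hx)), hcov, ?_⟩
  rw [disjoint_left]
  rintro a ha haL
  simp only [mem_iUnion] at ha
  obtain ⟨x, hx, hax⟩ := ha
  exact (hV3 x (htP x hx) hax) haL

/-- Extension of integer-valued continuous maps from compacta, values in a finset. -/
lemma extend_int_aux [T2Space X] (hQ : ClopenBasisProp X) (s : Finset ℤ) :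
    ∀ (P : Set X), IsCompact P → ∀ (φ : ↥P → ℤ), Continuous φ →
      (∀ p, φ p ∈ s) → ∃ Φ : X → ℤ, Continuous Φ ∧ ∀ p : ↥P, Φ p = φ p := by
  classical
  induction s using Finset.induction_on with
  | empty =>
    intro P hP φ hφ hs
    exact ⟨fun _ => 0, continuous_const, fun p => absurd (hs p) (by simp)⟩
  | @insert v s hv ih =>
    intro P hP φ hφ hs
    haveI : CompactSpace ↥P := isCompact_iff_compactSpace.mp hP
    set P₁ : Set X := Subtype.val '' (φ ⁻¹' {v}) with hP₁def
    set P₂ : Set X := Subtype.val '' (φ ⁻¹' (s : Set ℤ)) with hP₂def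
    have hP₁ : IsCompact P₁ :=
      ((isClosed_singleton.preimage hφ).isCompact).image continuous_subtype_val
    have hP₂ : IsCompact P₂ :=
      ((s.finite_toSet.isClosed.preimage hφ).isCompact).image continuous_subtype_val
    have hsub : P₂ ⊆ P := by rintro x ⟨p, hp, rfl⟩; exact p.2
    have hdisj : Disjoint P₁ P₂ := by
      rw [disjoint_left]
      rintro x ⟨p, hp, rfl⟩ ⟨q, hq, hqx⟩
      have hqp : q = p := Subtype.ext hqx
      rw [hqp] at hq
      simp only [mem_preimage, mem_singleton_iff] at hp
      simp only [mem_preimage, Finset.mem_coe] at hq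
      rw [hp] at hq
      exact hv hq
    obtain ⟨U, hU, hPU, hUd⟩ := clopen_separation hQ hP₁ hP₂.isClosed hdisj
    set φ₂ : ↥P₂ → ℤ := fun q => φ (Set.inclusion hsub q) with hφ₂def
    have hφ₂ : Continuous φ₂ := hφ.comp (continuous_inclusion hsub)
    have hs₂ : ∀ q, φ₂ q ∈ s := by
      rintro ⟨x, hx⟩
      obtain ⟨p, hp, hpx⟩ := hx
      have heq : Set.inclusion hsub ⟨x, ⟨p, hp, hpx⟩⟩ = p := Subtype.ext hpx.symm
      simp only [hφ₂def, heq]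
      exact hp
    obtain ⟨Φ₂, hΦ₂c, hΦ₂⟩ := ih P₂ hP₂ φ₂ hφ₂ hs₂
    refine ⟨U.piecewise (fun _ => v) Φ₂, ?_, ?_⟩
    · refine Continuous.piecewise ?_ continuous_const hΦ₂c
      rw [hU.frontier_eq]
      simp
    · intro p
      by_cases hpv : φ p = v
      · have hmem : (p : X) ∈ U := hPU ⟨p, by simp [hpv], rfl⟩
        rw [Set.piecewise_eq_of_mem _ _ _ hmem]
        exact hpv.symm
      · have hps : φ p ∈ s := by
          have := hs p
          rw [Finset.mem_insert] at this
          tauto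
        have hmem : (p : X) ∈ P₂ := ⟨p, hps, rfl⟩
        have hnU : (p : X) ∉ U := fun h => (disjoint_left.mp hUd h) hmem
        rw [Set.piecewise_eq_of_notMem _ _ _ hnU]
        have h2 := hΦ₂ ⟨(p : X), hmem⟩
        rw [h2]

lemma extend_int [T2Space X] (hQ : ClopenBasisProp X) {P : Set X} (hP : IsCompact P)
    (φ : ↥P → ℤ) (hφ : Continuous φ) :
    ∃ Φ : X → ℤ, Continuous Φ ∧ ∀ p : ↥P, Φ p = φ p := by
  haveI : CompactSpace ↥P := isCompact_iff_compactSpace.mp hP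
  have hfin : (Set.range φ).Finite := (isCompact_range hφ).finite_of_discrete
  exact extend_int_aux hQ hfin.toFinset P hP φ hφ
    (fun p => hfin.mem_toFinset.mpr ⟨p, rfl⟩)

lemma extend_pi [T2Space X] {A : Type*} (hQ : ClopenBasisProp X) {P : Set X}
    (hP : IsCompact P) (φ : ↥P → (A → ℤ)) (hφ : Continuous φ) :
    ∃ Φ : X → (A → ℤ), Continuous Φ ∧ ∀ p : ↥P, Φ p = φ p := by
  have h : ∀ a : A, ∃ Φa : X → ℤ, Continuous Φa ∧ ∀ p : ↥P, Φa p = φ p a := fun a =>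
    extend_int hQ hP (fun p => φ p a) ((continuous_apply a).comp hφ)
  choose Φ hc he using h
  exact ⟨fun x a => Φ a x, continuous_pi fun a => hc a, fun p => funext fun a => he a p⟩

/-- A bijection between discrete spaces is a homeomorphism. -/
def discreteHomeomorph {α β : Type*} [TopologicalSpace α] [TopologicalSpace β]
    [DiscreteTopology α] [DiscreteTopology β] (e : α ≃ β) : α ≃ₜ β where
  toEquiv := e
  continuous_toFun := continuous_of_discreteTopology
  continuous_invFun := continuous_of_discreteTopology

/-- `(ι → α × β) ≃ₜ (ι → α) × (ι → β)`. -/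
def arrowProdHomeo (ι α β : Type*) [TopologicalSpace α] [TopologicalSpace β] :
    (ι → α × β) ≃ₜ (ι → α) × (ι → β) where
  toEquiv := Equiv.arrowProdEquivProdArrow ι (fun _ => α) (fun _ => β)
  continuous_toFun := by
    refine Continuous.prodMk ?_ ?_
    · exact continuous_pi fun i => (continuous_apply i).fst
    · exact continuous_pi fun i => (continuous_apply i).snd
  continuous_invFun := continuous_pi fun i =>
    ((continuous_apply i).comp continuous_fst).prodMk ((continuous_apply i).comp continuous_snd)

/-- There is a bijection `ℤ ≃ ℤ × ℤ` fixing (in the sense `s ↦ (s,0)`) any finite set. -/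
lemma exists_equiv_int_prod (S : Set ℤ) (hS : S.Finite) :
    ∃ e : ℤ ≃ ℤ × ℤ, ∀ s ∈ S, e s = (s, 0) := by
  classical
  have hinj : Function.Injective (fun z : ℤ => (z, (0 : ℤ))) := fun a b h =>
    congrArg Prod.fst h
  set T : Set (ℤ × ℤ) := (fun z : ℤ => (z, (0 : ℤ))) '' S with hTdef
  have hTfin : T.Finite := hS.image _
  haveI h1 : Infinite ↥(Sᶜ) := hS.infinite_compl.to_subtype
  haveI h2 : Infinite ↥(Tᶜ) := hTfin.infinite_compl.to_subtype
  obtain ⟨d1⟩ := nonempty_denumerable ↥(Sᶜ)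
  obtain ⟨d2⟩ := nonempty_denumerable ↥(Tᶜ)
  let eC : ↥(Sᶜ) ≃ ↥(Tᶜ) := @Denumerable.equiv₂ _ _ d1 d2
  let eS : ↥S ≃ ↥T := Equiv.Set.image _ S hinj
  refine ⟨(Equiv.Set.sumCompl S).symm.trans ((eS.sumCongr eC).trans (Equiv.Set.sumCompl T)), ?_⟩
  intro s hs
  rw [Equiv.trans_apply, Equiv.trans_apply, Equiv.Set.sumCompl_symm_apply_of_mem hs]
  simp [eS, Equiv.Set.image, Equiv.Set.imageOfInjOn]

end Helpers

section MainLemma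

variable {Y : Type u} [TopologicalSpace Y] [T2Space Y] {A : Type v}

/-- The key extension theorem, over `ℤ` (so that we have a group structure). -/
theorem main_int (hQY : ClopenBasisProp Y)
    (P K : Set (Y × (A → ℤ))) (hP : IsCompact P) (hK : IsCompact K)
    (f : ↥P ≃ₜ ↥K) (hf : ∀ p : P, ((f p : Y × (A → ℤ)).1 = (p : Y × (A → ℤ)).1)) :
    ∃ F : (Y × (A → ℤ)) ≃ₜ (Y × (A → ℤ)),
      (∀ p : P, F (p : Y × (A → ℤ)) = (f p : Y × (A → ℤ))) ∧
      (∀ z : Y × (A → ℤ), (F z).1 = z.1) := by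
  classical
  have hQX : ClopenBasisProp (Y × (A → ℤ)) := clopenBasisProp_prod hQY clopenBasisProp_pi
  -- coordinatewise finite images of `P ∪ K`
  have hPK : IsCompact (P ∪ K) := hP.union hK
  haveI : CompactSpace ↥(P ∪ K) := isCompact_iff_compactSpace.mp hPK
  have hSfin : ∀ a : A,
      (Set.range fun z : ↥(P ∪ K) => (z : Y × (A → ℤ)).2 a).Finite := fun a =>
    (isCompact_range (((continuous_apply a).comp continuous_snd).comp
      continuous_subtype_val)).finite_of_discrete
  have hE : ∀ a : A, ∃ e : ℤ ≃ ℤ × ℤ,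
      ∀ s ∈ Set.range fun z : ↥(P ∪ K) => (z : Y × (A → ℤ)).2 a, e s = (s, 0) := fun a =>
    exists_equiv_int_prod _ (hSfin a)
  choose ea hea using hE
  let θ : (A → ℤ) ≃ₜ (A → ℤ) × (A → ℤ) :=
    (Homeomorph.piCongrRight fun a => discreteHomeomorph (ea a)).trans (arrowProdHomeo A ℤ ℤ)
  have hθ : ∀ z : Y × (A → ℤ), z ∈ P ∪ K → θ z.2 = (z.2, 0) := by
    intro z hz
    have h : ∀ a, ea a (z.2 a) = (z.2 a, 0) := fun a => hea a _ ⟨⟨z, hz⟩, rfl⟩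
    have : θ z.2 = (fun a => (ea a (z.2 a)).1, fun a => (ea a (z.2 a)).2) := rfl
    rw [this]
    refine Prod.ext ?_ ?_ <;> (funext a; simp [h a])
  -- extensions of the second coordinates of `f` and `f.symm`
  obtain ⟨F₂, hF₂c, hF₂⟩ := extend_pi hQX hP (fun p => (f p : Y × (A → ℤ)).2)
    (continuous_snd.comp (continuous_subtype_val.comp f.continuous))
  obtain ⟨G₂, hG₂c, hG₂⟩ := extend_pi hQX hK (fun k => (f.symm k : Y × (A → ℤ)).2)
    (continuous_snd.comp (continuous_subtype_val.comp f.symm.continuous))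
  -- the three homeomorphisms of `Y × (A → ℤ) × (A → ℤ)` (Klee's trick)
  let H₁ : (Y × (A → ℤ) × (A → ℤ)) ≃ₜ (Y × (A → ℤ) × (A → ℤ)) :=
    { toFun := fun w => (w.1, w.2.1, w.2.2 + F₂ (w.1, w.2.1))
      invFun := fun w => (w.1, w.2.1, w.2.2 - F₂ (w.1, w.2.1))
      left_inv := fun w => by simp
      right_inv := fun w => by simp
      continuous_toFun := by
        refine continuous_fst.prodMk (Continuous.prodMk ?_ ?_)
        · exact continuous_fst.comp continuous_snd
        · exact (continuous_snd.comp continuous_snd).add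
            (hF₂c.comp (continuous_fst.prodMk (continuous_fst.comp continuous_snd)))
      continuous_invFun := by
        refine continuous_fst.prodMk (Continuous.prodMk ?_ ?_)
        · exact continuous_fst.comp continuous_snd
        · exact (continuous_snd.comp continuous_snd).sub
            (hF₂c.comp (continuous_fst.prodMk (continuous_fst.comp continuous_snd))) }
  let H₂ : (Y × (A → ℤ) × (A → ℤ)) ≃ₜ (Y × (A → ℤ) × (A → ℤ)) :=
    { toFun := fun w => (w.1, w.2.1 - G₂ (w.1, w.2.2), w.2.2)
      invFun := fun w => (w.1, w.2.1 + G₂ (w.1, w.2.2), w.2.2)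
      left_inv := fun w => by simp
      right_inv := fun w => by simp
      continuous_toFun := by
        refine continuous_fst.prodMk (Continuous.prodMk ?_ ?_)
        · exact (continuous_fst.comp continuous_snd).sub
            (hG₂c.comp (continuous_fst.prodMk (continuous_snd.comp continuous_snd)))
        · exact continuous_snd.comp continuous_snd
      continuous_invFun := by
        refine continuous_fst.prodMk (Continuous.prodMk ?_ ?_)
        · exact (continuous_fst.comp continuous_snd).add
            (hG₂c.comp (continuous_fst.prodMk (continuous_snd.comp continuous_snd)))
        · exact continuous_snd.comp continuous_snd }
  let Sw : (Y × (A → ℤ) × (A → ℤ)) ≃ₜ (Y × (A → ℤ) × (A → ℤ)) :=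
    (Homeomorph.refl Y).prodCongr (Homeomorph.prodComm _ _)
  let Θ : (Y × (A → ℤ)) ≃ₜ (Y × (A → ℤ) × (A → ℤ)) :=
    (Homeomorph.refl Y).prodCongr θ
  refine ⟨Θ.trans (H₁.trans (H₂.trans (Sw.trans Θ.symm))), ?_, ?_⟩
  · intro p
    have hzP : (p : Y × (A → ℤ)) ∈ P ∪ K := Or.inl p.2
    have hfK : ((f p : Y × (A → ℤ))) ∈ P ∪ K := Or.inr (f p).2
    have h1 : Θ (p : Y × (A → ℤ)) = ((p : Y × (A → ℤ)).1, (p : Y × (A → ℤ)).2, 0) := by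
      show ((p : Y × (A → ℤ)).1, θ (p : Y × (A → ℤ)).2) = _
      rw [hθ _ hzP]
    have h2 : H₁ ((p : Y × (A → ℤ)).1, (p : Y × (A → ℤ)).2, 0)
        = ((p : Y × (A → ℤ)).1, (p : Y × (A → ℤ)).2, (f p : Y × (A → ℤ)).2) := by
      show ((p : Y × (A → ℤ)).1, (p : Y × (A → ℤ)).2,
        0 + F₂ ((p : Y × (A → ℤ)).1, (p : Y × (A → ℤ)).2)) = _
      rw [Prod.mk.eta, hF₂ p, zero_add]
    have hpair : ((p : Y × (A → ℤ)).1, (f p : Y × (A → ℤ)).2) = (f p : Y × (A → ℤ)) := by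
      rw [← hf p, Prod.mk.eta]
    have h3 : H₂ ((p : Y × (A → ℤ)).1, (p : Y × (A → ℤ)).2, (f p : Y × (A → ℤ)).2)
        = ((p : Y × (A → ℤ)).1, 0, (f p : Y × (A → ℤ)).2) := by
      show ((p : Y × (A → ℤ)).1,
        (p : Y × (A → ℤ)).2 - G₂ ((p : Y × (A → ℤ)).1, (f p : Y × (A → ℤ)).2),
        (f p : Y × (A → ℤ)).2) = _
      rw [hpair, hG₂ (f p), f.symm_apply_apply, sub_self]
    have h4 : Sw ((p : Y × (A → ℤ)).1, 0, (f p : Y × (A → ℤ)).2)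
        = ((p : Y × (A → ℤ)).1, (f p : Y × (A → ℤ)).2, 0) := rfl
    have h5 : Θ ((f p : Y × (A → ℤ))) = ((p : Y × (A → ℤ)).1, (f p : Y × (A → ℤ)).2, 0) := by
      show ((f p : Y × (A → ℤ)).1, θ (f p : Y × (A → ℤ)).2) = _
      rw [hθ _ hfK, hf p]
    simp only [Homeomorph.trans_apply]
    rw [h1, h2, h3, h4, ← h5, Homeomorph.symm_apply_apply]
  · intro z
    rfl

end MainLemma

/-- **Theorem 1.1**: if `Y` is a 0-dimensional Tychonoff space, `τ ≥ ℵ₀` is the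
cardinality of the index set `A`, and `P`, `K` are compact subsets of `Y × ℕ^τ`, then every
homeomorphism `f : P → K` with `π₁ ∘ f = π₁|P` extends to a homeomorphism
`f̃ : Y × ℕ^τ → Y × ℕ^τ` with `π₁ ∘ f̃ = π₁`. -/
theorem stmt0 {Y : Type u} [TopologicalSpace Y] [T35Space Y] (hY : ZeroDimensional Y)
    (A : Type v) [Infinite A]
    (P K : Set (Y × (A → ℕ))) (hP : IsCompact P) (hK : IsCompact K)
    (f : ↥P ≃ₜ ↥K) (hf : ∀ p : P, ((f p : Y × (A → ℕ)).1 = (p : Y × (A → ℕ)).1)) :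
    ∃ F : (Y × (A → ℕ)) ≃ₜ (Y × (A → ℕ)),
      (∀ p : P, F (p : Y × (A → ℕ)) = (f p : Y × (A → ℕ))) ∧
      (∀ z : Y × (A → ℕ), (F z).1 = z.1) := by
  classical
  -- `Y` has a clopen basis
  obtain ⟨Z, _, hZc, hZ2, hZt, e, he, -⟩ := hY
  have hQY : ClopenBasisProp Y :=
    clopenBasisProp_of_embedding (clopenBasisProp_of_compact_t2_totdisc) he
  -- transport along `ℕ ≃ ℤ`
  let ν : ℕ ≃ ℤ := (Denumerable.eqv ℤ).symm
  let μ : (A → ℕ) ≃ₜ (A → ℤ) := Homeomorph.piCongrRight fun _ => discreteHomeomorph ν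
  let M : (Y × (A → ℕ)) ≃ₜ (Y × (A → ℤ)) := (Homeomorph.refl Y).prodCongr μ
  have hM1 : ∀ z : Y × (A → ℕ), (M z).1 = z.1 := fun z => rfl
  have hM1' : ∀ z : Y × (A → ℤ), (M.symm z).1 = z.1 := fun z => rfl
  set P' : Set (Y × (A → ℤ)) := M '' P with hP'def
  set K' : Set (Y × (A → ℤ)) := M '' K with hK'def
  have hP' : IsCompact P' := hP.image M.continuous
  have hK' : IsCompact K' := hK.image M.continuous
  let f' : ↥P' ≃ₜ ↥K' := (M.image P).symm.trans (f.trans (M.image K))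
  have hf' : ∀ p : P', ((f' p : Y × (A → ℤ)).1 = (p : Y × (A → ℤ)).1) := by
    intro p'
    set p : ↥P := (M.image P).symm p' with hpdef
    have hpp : (p' : Y × (A → ℤ)) = M (p : Y × (A → ℕ)) := by
      have : (M.image P) p = p' := by rw [hpdef, Homeomorph.apply_symm_apply]
      rw [← this]
      rfl
    have : (f' p' : Y × (A → ℤ)) = M ((f p : Y × (A → ℕ))) := rfl
    rw [this, hpp, hM1, hM1, hf p]
  obtain ⟨F', hF'ext, hF'fst⟩ := main_int hQY P' K' hP' hK' f' hf'
  refine ⟨M.trans (F'.trans M.symm), ?_, ?_⟩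
  · intro p
    have hmem : M (p : Y × (A → ℕ)) ∈ P' := mem_image_of_mem _ p.2
    have h1 := hF'ext ⟨M (p : Y × (A → ℕ)), hmem⟩
    have h2 : (f' ⟨M (p : Y × (A → ℕ)), hmem⟩ : Y × (A → ℤ)) = M ((f p : Y × (A → ℕ))) := by
      have : (⟨M (p : Y × (A → ℕ)), hmem⟩ : ↥P') = (M.image P) p := rfl
      rw [this]
      show (((M.image K) (f ((M.image P).symm ((M.image P) p)))) : Y × (A → ℤ)) = _
      rw [Homeomorph.symm_apply_apply]
      rfl
    simp only [Homeomorph.trans_apply]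
    rw [h1, h2, Homeomorph.symm_apply_apply]
  · intro z
    simp only [Homeomorph.trans_apply]
    rw [hM1', hF'fst, hM1]
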